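/- (Generalization error bound for heterogeneous quantile regression, Lemma A.6.) For any κ > 0, under (C.0), σ_R²(n) := sup_{θ∈Θ} (1/n) Σ E[ρ_τ²(Y_i − X_i⊤θ)] < ∞ and E‖X‖₂² < ∞, for every δ ∈ (0,1) and α > 0, the following holds with probability at least 1 − δ: R^n_{ρ_τ}(θ̂_n) − R̂_{ψ,ρ_τ,α}(θ̂_n) ≤ 2κ·l_τ·E‖X‖₂ + α·sup_{θ∈Θ} R^n_{ρ_τ²}(θ) + α·(κ·l_τ)²·E‖X‖₂² + (1/(nα))·log(N(Θ,κ)/δ). -/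

import Mathlib

open MeasureTheory ProbabilityTheory Real
open scoped BigOperators ENNReal RealInnerProductSpace

/-- The quantile (check) loss `ρ_τ(u) = u(τ − 1(u<0))`. -/
noncomputable def quantileLoss (τ u : ℝ) : ℝ := u * (τ - if u < 0 then 1 else 0)

/-- `N` is the covering number of `Θ` by closed balls of radius `κ`. -/
def IsCoveringNumber {E : Type*} [PseudoMetricSpace E] (Θ : Set E) (κ : ℝ) (N : ℕ) : Prop :=
  (∃ s : Finset E, s.card = N ∧ Θ ⊆ ⋃ y ∈ s, Metric.closedBall y κ) ∧
  ∀ m : ℕ, (∃ s : Finset E, s.card = m ∧ Θ ⊆ ⋃ y ∈ s, Metric.closedBall y κ) → N ≤ m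

lemma quantileLoss_eq (τ u : ℝ) : quantileLoss τ u = τ * u + max (-u) 0 := by
  unfold quantileLoss
  split_ifs with h
  · rw [max_eq_left (by linarith : (0:ℝ) ≤ -u)]; ring
  · push_neg at h
    rw [max_eq_right (by linarith : -u ≤ (0:ℝ))]; ring

lemma quantileLoss_nonneg {τ : ℝ} (hτ0 : 0 ≤ τ) (hτ1 : τ ≤ 1) (u : ℝ) :
    0 ≤ quantileLoss τ u := by
  rw [quantileLoss_eq]
  rcases le_or_gt 0 u with h | h
  · have : max (-u) 0 = 0 := max_eq_right (by linarith)
    nlinarith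
  · have : max (-u) 0 = -u := max_eq_left (by linarith)
    nlinarith

lemma quantileLoss_lip {τ : ℝ} (hτ0 : 0 ≤ τ) (u v : ℝ) :
    |quantileLoss τ u - quantileLoss τ v| ≤ (1 + τ) * |u - v| := by
  rw [quantileLoss_eq, quantileLoss_eq]
  have h1 : |max (-u) 0 - max (-v) 0| ≤ |(-u) - (-v)| := abs_max_sub_max_le_abs _ _ _
  have h2 : |(-u) - (-v)| = |u - v| := by rw [← abs_neg]; ring_nf
  calc |τ * u + max (-u) 0 - (τ * v + max (-v) 0)|
      = |τ * (u - v) + (max (-u) 0 - max (-v) 0)| := by ring_nf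
    _ ≤ |τ * (u - v)| + |max (-u) 0 - max (-v) 0| := abs_add_le _ _
    _ ≤ τ * |u - v| + |u - v| := by
        rw [abs_mul, abs_of_nonneg hτ0]
        exact add_le_add le_rfl (h1.trans_eq h2)
    _ = (1 + τ) * |u - v| := by ring

set_option maxHeartbeats 2000000 in
lemma quantileLoss_measurable (τ : ℝ) : Measurable (quantileLoss τ) := by
  unfold quantileLoss
  exact measurable_id.mul (measurable_const.sub
    (Measurable.ite (measurableSet_lt measurable_id measurable_const)
      measurable_const measurable_const))

set_option maxHeartbeats 4000000 in
/-- **Lemma A.6 (generalization error bound for heterogeneous quantile regression).** For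
any `κ > 0`, under (C.0), finiteness of the variance factor `σ_R²(n)` and `E‖X‖₂² < ∞`,
with probability at least `1 − δ` the sample risk of the log-truncated quantile estimator
exceeds its truncated empirical risk by at most the displayed quantity. -/
theorem heterogeneous_quantile_generalization_bound
    {Ω : Type*} [MeasurableSpace Ω] (μ : Measure Ω) [IsProbabilityMeasure μ]
    (p n : ℕ) (hn : 0 < n)
    (τ : ℝ) (hτ : τ ∈ Set.Ioo (0 : ℝ) 1)
    -- i.i.d. inputs with generic copy `X0`, heterogeneous independent noises
    (Xi : Fin n → Ω → EuclideanSpace ℝ (Fin p)) (Yi : Fin n → Ω → ℝ)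
    (X0 : Ω → EuclideanSpace ℝ (Fin p))
    (εi : Fin n → Ω → ℝ)
    (hXmeas : ∀ i, Measurable (Xi i)) (hYmeas : ∀ i, Measurable (Yi i))
    (hX0meas : Measurable X0) (hεmeas : ∀ i, Measurable (εi i))
    (hXident : ∀ i, Measure.map (Xi i) μ = Measure.map X0 μ)
    (hindep : iIndepFun (fun i ω => (Xi i ω, Yi i ω)) μ)
    -- the hypothesis space, (C.0)
    (Θ : Set (EuclideanSpace ℝ (Fin p))) (hΘne : Θ.Nonempty)
    (r : ℝ) (hr : 0 < r)
    (hC0conv : Convex ℝ Θ) (hC0bdd : ∀ θ ∈ Θ, ‖θ‖ ≤ r)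
    -- the linear quantile model `Y_i = X_i⊤θ*_n + ε_i` with `P(ε_i < 0 | X_i) = τ`
    (θstarn : EuclideanSpace ℝ (Fin p)) (hθstarn_mem : θstarn ∈ Θ)
    (hmodel : ∀ i ω, Yi i ω = (⟪Xi i ω, θstarn⟫ : ℝ) + εi i ω)
    (hquantile : ∀ i,
      μ[Set.indicator {ω | εi i ω < 0} (fun _ => (1 : ℝ))
          | MeasurableSpace.comap (Xi i) inferInstance] =ᵐ[μ] fun _ => τ)
    -- the sample risk and the true parameter
    (Rn : EuclideanSpace ℝ (Fin p) → ℝ)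
    (hRn : ∀ θ, Rn θ = (1 / (n : ℝ)) * ∑ i, ∫ ω, quantileLoss τ (Yi i ω - ⟪Xi i ω, θ⟫) ∂μ)
    (hRn_int : ∀ θ ∈ Θ, ∀ i, Integrable (fun ω => quantileLoss τ (Yi i ω - ⟪Xi i ω, θ⟫)) μ)
    -- the variance factor `σ_R²(n)` and moment conditions
    (hsq_int : ∀ θ ∈ Θ, ∀ i,
        Integrable (fun ω => quantileLoss τ (Yi i ω - ⟪Xi i ω, θ⟫) ^ 2) μ)
    (hbdd : BddAbove ((fun θ => (1 / (n : ℝ)) *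
        ∑ i, ∫ ω, quantileLoss τ (Yi i ω - ⟪Xi i ω, θ⟫) ^ 2 ∂μ) '' Θ))
    (hX_int : Integrable (fun ω => ‖X0 ω‖) μ)
    (hX_sq_int : Integrable (fun ω => ‖X0 ω‖ ^ 2) μ)
    -- Catoni's truncation function
    (ψ : ℝ → ℝ) (hψ_cont : Continuous ψ) (hψ_mono : Monotone ψ)
    (hψ_lb : ∀ x : ℝ, -Real.log (1 - x + x ^ 2 / 2) ≤ ψ x)
    (hψ_ub : ∀ x : ℝ, ψ x ≤ Real.log (1 + x + x ^ 2 / 2))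
    (δ κ α : ℝ) (hδ : δ ∈ Set.Ioo (0 : ℝ) 1) (hκ : 0 < κ) (hα : 0 < α)
    (N : ℕ) (hN : IsCoveringNumber Θ κ N)
    -- the log-truncated quantile estimator
    (θhat : Ω → EuclideanSpace ℝ (Fin p))
    (hθhat_mem : ∀ ω, θhat ω ∈ Θ)
    (hθhat_min : ∀ ω, ∀ θ ∈ Θ,
      (1 / (n * α)) * ∑ i, ψ (α * quantileLoss τ (Yi i ω - ⟪Xi i ω, θhat ω⟫))
        ≤ (1 / (n * α)) * ∑ i, ψ (α * quantileLoss τ (Yi i ω - ⟪Xi i ω, θ⟫))) :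
    μ {ω | Rn (θhat ω)
          - (1 / (n * α)) * ∑ i, ψ (α * quantileLoss τ (Yi i ω - ⟪Xi i ω, θhat ω⟫)) ≤
        2 * κ * max (1 + τ) (2 - τ) * (∫ ω', ‖X0 ω'‖ ∂μ)
        + α * sSup ((fun θ => (1 / (n : ℝ)) *
            ∑ i, ∫ ω', quantileLoss τ (Yi i ω' - ⟪Xi i ω', θ⟫) ^ 2 ∂μ) '' Θ)
        + α * (κ * max (1 + τ) (2 - τ)) ^ 2 * (∫ ω', ‖X0 ω'‖ ^ 2 ∂μ)
        + (1 / (n * α)) * Real.log (N / δ)}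
      ≥ ENNReal.ofReal (1 - δ) := by
  classical
  obtain ⟨hτ0, hτ1⟩ := hτ
  obtain ⟨hδ0, hδ1⟩ := hδ
  set l : ℝ := max (1 + τ) (2 - τ) with hl_def
  have hl1 : (1:ℝ) ≤ l := le_trans (by linarith) (le_max_left _ _)
  have hl0 : (0:ℝ) < l := lt_of_lt_of_le one_pos hl1
  have hn' : (0:ℝ) < n := by exact_mod_cast hn
  have hnα : (0:ℝ) < (n:ℝ) * α := mul_pos hn' hα
  -- abbreviations
  set ρ : EuclideanSpace ℝ (Fin p) → Fin n → Ω → ℝ :=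
    fun θ i ω => quantileLoss τ (Yi i ω - ⟪Xi i ω, θ⟫) with hρ_def
  -- measurability
  have hinner_meas : ∀ (i : Fin n) (θ : EuclideanSpace ℝ (Fin p)), Measurable fun ω => (⟪Xi i ω, θ⟫ : ℝ) :=
    fun i θ => (Continuous.measurable (continuous_id.inner continuous_const)).comp (hXmeas i)
  have hρmeas : ∀ (θ : EuclideanSpace ℝ (Fin p)) (i : Fin n), Measurable (ρ θ i) :=
    fun θ i => (quantileLoss_measurable τ).comp ((hYmeas i).sub (hinner_meas i θ))
  have hρ0 : ∀ (θ : EuclideanSpace ℝ (Fin p)) (i : Fin n) (ω : Ω), 0 ≤ ρ θ i ω :=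
    fun θ i ω => quantileLoss_nonneg hτ0.le hτ1.le _
  -- Lipschitz property in θ
  have hlip : ∀ (θ θ' : EuclideanSpace ℝ (Fin p)) (i : Fin n) (ω : Ω),
      |ρ θ i ω - ρ θ' i ω| ≤ l * ‖Xi i ω‖ * ‖θ - θ'‖ := by
    intro θ θ' i ω
    have h := quantileLoss_lip hτ0.le (Yi i ω - ⟪Xi i ω, θ⟫) (Yi i ω - ⟪Xi i ω, θ'⟫)
    have harg : (Yi i ω - ⟪Xi i ω, θ⟫) - (Yi i ω - ⟪Xi i ω, θ'⟫) = ⟪Xi i ω, θ' - θ⟫ := by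
      rw [inner_sub_right]; ring
    have hCS : |(⟪Xi i ω, θ' - θ⟫ : ℝ)| ≤ ‖Xi i ω‖ * ‖θ' - θ‖ := abs_real_inner_le_norm _ _
    have hτl : 1 + τ ≤ l := le_max_left _ _
    have h2 : |ρ θ i ω - ρ θ' i ω| ≤ (1 + τ) * (‖Xi i ω‖ * ‖θ' - θ‖) := by
      refine h.trans ?_
      rw [harg]
      exact mul_le_mul_of_nonneg_left hCS (by linarith)
    have h3 : ‖θ' - θ‖ = ‖θ - θ'‖ := norm_sub_rev _ _
    calc |ρ θ i ω - ρ θ' i ω| ≤ (1 + τ) * (‖Xi i ω‖ * ‖θ' - θ‖) := h2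
      _ ≤ l * (‖Xi i ω‖ * ‖θ' - θ‖) :=
          mul_le_mul_of_nonneg_right hτl (mul_nonneg (norm_nonneg _) (norm_nonneg _))
      _ = l * ‖Xi i ω‖ * ‖θ - θ'‖ := by rw [h3]; ring
  -- transfer of integrability/integrals from X0 to Xi via identical distribution
  have htransfer : ∀ g : EuclideanSpace ℝ (Fin p) → ℝ, Continuous g →
      Integrable (fun ω => g (X0 ω)) μ → ∀ i,
      Integrable (fun ω => g (Xi i ω)) μ ∧ ∫ ω, g (Xi i ω) ∂μ = ∫ ω, g (X0 ω) ∂μ := by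
    intro g hg hint i
    have h1 : Integrable g (Measure.map (Xi i) μ) := by
      rw [hXident i]
      exact (integrable_map_measure hg.aestronglyMeasurable hX0meas.aemeasurable).2 hint
    constructor
    · exact (integrable_map_measure hg.aestronglyMeasurable (hXmeas i).aemeasurable).1 h1
    · rw [← integral_map (hXmeas i).aemeasurable hg.aestronglyMeasurable, hXident i,
        integral_map hX0meas.aemeasurable hg.aestronglyMeasurable]
  have hXi_int : ∀ i, Integrable (fun ω => ‖Xi i ω‖) μ :=
    fun i => (htransfer _ continuous_norm hX_int i).1
  have hXi_eq : ∀ i, ∫ ω, ‖Xi i ω‖ ∂μ = ∫ ω, ‖X0 ω‖ ∂μ :=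
    fun i => (htransfer _ continuous_norm hX_int i).2
  have hXi_sq_int : ∀ i, Integrable (fun ω => ‖Xi i ω‖ ^ 2) μ :=
    fun i => (htransfer _ (continuous_norm.pow 2) hX_sq_int i).1
  have hXi_sq_eq : ∀ i, ∫ ω, ‖Xi i ω‖ ^ 2 ∂μ = ∫ ω, ‖X0 ω‖ ^ 2 ∂μ :=
    fun i => (htransfer _ (continuous_norm.pow 2) hX_sq_int i).2
  -- the covering net
  obtain ⟨⟨s, hcard, hcover⟩, -⟩ := hN
  have hNpos : 0 < N := by
    rcases hΘne with ⟨θ0, hθ0⟩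
    by_contra h
    have hN0 : N = 0 := Nat.eq_zero_of_not_pos h
    rw [hN0, Finset.card_eq_zero] at hcard
    subst hcard
    simpa using hcover hθ0
  have hNR : (0:ℝ) < N := by exact_mod_cast hNpos
  set s' := s.filter (fun y => (Θ ∩ Metric.closedBall y κ).Nonempty) with hs'_def
  -- the shifted losses, truncated variables, moments, thresholds, bad events
  set W : EuclideanSpace ℝ (Fin p) → Fin n → Ω → ℝ :=
    fun y i ω => ρ y i ω - l * κ * ‖Xi i ω‖ with hW_def
  set ξ : EuclideanSpace ℝ (Fin p) → Fin n → Ω → ℝ :=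
    fun y i ω => -ψ (α * W y i ω) with hξ_def
  set m1 : EuclideanSpace ℝ (Fin p) → Fin n → ℝ := fun y i => ∫ ω, W y i ω ∂μ with hm1_def
  set m2 : EuclideanSpace ℝ (Fin p) → Fin n → ℝ :=
    fun y i => ∫ ω, (W y i ω) ^ 2 ∂μ with hm2_def
  set sj : EuclideanSpace ℝ (Fin p) → ℝ :=
    fun y => -(α * ∑ i, m1 y i) + α ^ 2 / 2 * ∑ i, m2 y i + Real.log (N / δ) with hsj_def
  set Bad : EuclideanSpace ℝ (Fin p) → Set Ω :=
    fun y => {ω | sj y ≤ ∑ i, ξ y i ω} with hBad_def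
  have hWmeas : ∀ y i, Measurable (W y i) :=
    fun y i => (hρmeas y i).sub (((hXmeas i).norm).const_mul (l * κ))
  have hξmeas : ∀ y i, Measurable (ξ y i) :=
    fun y i => ((hψ_cont.measurable).comp ((hWmeas y i).const_mul α)).neg
  have hBadmeas : ∀ y, MeasurableSet (Bad y) :=
    fun y => measurableSet_le measurable_const (Finset.measurable_sum _ fun i _ => hξmeas y i)
  -- domination of W for net points whose ball meets Θ
  have hyD : ∀ y ∈ s', ‖y - θstarn‖ ≤ κ + 2 * r := by
    intro y hy
    obtain ⟨θ0, hθ0Θ, hθ0b⟩ := (Finset.mem_filter.1 hy).2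
    have h1 : ‖y - θ0‖ ≤ κ := by
      have := Metric.mem_closedBall.1 hθ0b
      rw [dist_comm] at this
      rwa [← dist_eq_norm]
    have h2 : ‖θ0 - θstarn‖ ≤ ‖θ0‖ + ‖θstarn‖ := norm_sub_le _ _
    have h3 : ‖θ0‖ ≤ r := hC0bdd θ0 hθ0Θ
    have h4 : ‖θstarn‖ ≤ r := hC0bdd θstarn hθstarn_mem
    calc ‖y - θstarn‖ = ‖(y - θ0) + (θ0 - θstarn)‖ := by abel_nf
      _ ≤ ‖y - θ0‖ + ‖θ0 - θstarn‖ := norm_add_le _ _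
      _ ≤ κ + 2 * r := by linarith
  have hWabs : ∀ y ∈ s', ∀ i ω,
      |W y i ω| ≤ ρ θstarn i ω + l * (2 * κ + 2 * r) * ‖Xi i ω‖ := by
    intro y hy i ω
    set B := ‖Xi i ω‖ with hB_def
    have hB0 : (0:ℝ) ≤ B := norm_nonneg _
    have hab : |ρ y i ω - ρ θstarn i ω| ≤ l * B * (κ + 2 * r) := by
      refine (hlip y θstarn i ω).trans ?_
      exact mul_le_mul_of_nonneg_left (hyD y hy) (mul_nonneg hl0.le hB0)
    obtain ⟨hab1, hab2⟩ := abs_le.1 hab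
    have hρy0 := hρ0 y i ω
    have hρs0 := hρ0 θstarn i ω
    have hlκB : 0 ≤ l * κ * B := mul_nonneg (mul_nonneg hl0.le hκ.le) hB0
    have hid : l * (2 * κ + 2 * r) * B = l * B * (κ + 2 * r) + l * κ * B := by ring
    have hl2 : 0 ≤ l * B * (κ + 2 * r) :=
      mul_nonneg (mul_nonneg hl0.le hB0) (by linarith)
    rw [abs_le]
    constructor
    · simp only [hW_def]
      linarith
    · simp only [hW_def]
      linarith
  have hW_int : ∀ y ∈ s', ∀ i, Integrable (W y i) μ := by
    intro y hy i
    refine Integrable.mono' ((hRn_int θstarn hθstarn_mem i).add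
      ((hXi_int i).const_mul (l * (2 * κ + 2 * r)))) (hWmeas y i).aestronglyMeasurable ?_
    refine ae_of_all _ fun ω => ?_
    rw [Real.norm_eq_abs]
    exact hWabs y hy i ω
  have hW2_int : ∀ y ∈ s', ∀ i, Integrable (fun ω => (W y i ω) ^ 2) μ := by
    intro y hy i
    have hdom : Integrable (fun ω => 2 * ρ θstarn i ω ^ 2
        + 2 * (l * (2 * κ + 2 * r)) ^ 2 * ‖Xi i ω‖ ^ 2) μ :=
      ((hsq_int θstarn hθstarn_mem i).const_mul 2).add
        ((hXi_sq_int i).const_mul (2 * (l * (2 * κ + 2 * r)) ^ 2))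
    refine Integrable.mono' hdom ((hWmeas y i).pow_const 2).aestronglyMeasurable ?_
    refine ae_of_all _ fun ω => ?_
    have h1 := hWabs y hy i ω
    have h2 : |W y i ω| ^ 2 ≤ (ρ θstarn i ω + l * (2 * κ + 2 * r) * ‖Xi i ω‖) ^ 2 :=
      pow_le_pow_left₀ (abs_nonneg _) h1 2
    rw [sq_abs] at h2
    rw [Real.norm_eq_abs, abs_of_nonneg (sq_nonneg _)]
    have key : W y i ω ^ 2 ≤ 2 * ρ θstarn i ω ^ 2
        + 2 * (l * (2 * κ + 2 * r)) ^ 2 * ‖Xi i ω‖ ^ 2 := by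
      nlinarith [sq_nonneg (ρ θstarn i ω - l * (2 * κ + 2 * r) * ‖Xi i ω‖)]
    exact key
  -- Catoni's inequality pointwise
  have hexp_le : ∀ x : ℝ, Real.exp (-ψ x) ≤ 1 - x + x ^ 2 / 2 := by
    intro x
    have hq : (0:ℝ) < 1 - x + x ^ 2 / 2 := by nlinarith [sq_nonneg (x - 1)]
    have h1 := hψ_lb x
    calc Real.exp (-ψ x) ≤ Real.exp (Real.log (1 - x + x ^ 2 / 2)) :=
          Real.exp_le_exp.2 (by linarith)
      _ = 1 - x + x ^ 2 / 2 := Real.exp_log hq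
  have hξdom : ∀ y i ω, Real.exp (ξ y i ω) ≤ 1 - α * W y i ω + α ^ 2 / 2 * (W y i ω) ^ 2 := by
    intro y i ω
    have h1 := hexp_le (α * W y i ω)
    have h2 : (α * W y i ω) ^ 2 / 2 = α ^ 2 / 2 * (W y i ω) ^ 2 := by ring
    simp only [hξ_def]
    linarith
  have hdom_int : ∀ y ∈ s', ∀ i,
      Integrable (fun ω => 1 - α * W y i ω + α ^ 2 / 2 * (W y i ω) ^ 2) μ := by
    intro y hy i
    exact ((integrable_const 1).sub ((hW_int y hy i).const_mul α)).add
      ((hW2_int y hy i).const_mul (α ^ 2 / 2))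
  have hξexp_int : ∀ y ∈ s', ∀ i, Integrable (fun ω => Real.exp (1 * ξ y i ω)) μ := by
    intro y hy i
    refine Integrable.mono' (hdom_int y hy i)
      ((((hξmeas y i).const_mul 1)).exp.aestronglyMeasurable) ?_
    refine ae_of_all _ fun ω => ?_
    rw [Real.norm_eq_abs, abs_of_pos (Real.exp_pos _), one_mul]
    exact hξdom y i ω
  have hmgf_le : ∀ y ∈ s', ∀ i,
      mgf (ξ y i) μ 1 ≤ Real.exp (-(α * m1 y i) + α ^ 2 / 2 * m2 y i) := by
    intro y hy i
    have h1 : mgf (ξ y i) μ 1 ≤ ∫ ω, (1 - α * W y i ω + α ^ 2 / 2 * (W y i ω) ^ 2) ∂μ := by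
      rw [mgf]
      refine integral_mono (hξexp_int y hy i) (hdom_int y hy i) fun ω => ?_
      rw [one_mul]
      exact hξdom y i ω
    have h2 : ∫ ω, (1 - α * W y i ω + α ^ 2 / 2 * (W y i ω) ^ 2) ∂μ
        = 1 - α * m1 y i + α ^ 2 / 2 * m2 y i := by
      have hf : Integrable (fun ω => 1 - α * W y i ω) μ :=
        (integrable_const 1).sub ((hW_int y hy i).const_mul α)
      have hg : Integrable (fun ω => α ^ 2 / 2 * (W y i ω) ^ 2) μ :=
        (hW2_int y hy i).const_mul (α ^ 2 / 2)
      rw [integral_add hf hg,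
        integral_sub (integrable_const 1) ((hW_int y hy i).const_mul α),
        integral_const_mul, integral_const_mul, integral_const]
      simp [hm1_def, hm2_def]
    have h3 : 1 - α * m1 y i + α ^ 2 / 2 * m2 y i
        ≤ Real.exp (-(α * m1 y i) + α ^ 2 / 2 * m2 y i) := by
      have := Real.add_one_le_exp (-(α * m1 y i) + α ^ 2 / 2 * m2 y i)
      linarith
    linarith
  -- independence of the truncated variables
  have hindepξ : ∀ y : EuclideanSpace ℝ (Fin p),
      iIndepFun (ξ y) μ := by
    intro y
    have hg : Measurable (fun q : EuclideanSpace ℝ (Fin p) × ℝ =>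
        -ψ (α * (quantileLoss τ (q.2 - ⟪q.1, y⟫) - l * κ * ‖q.1‖))) := by
      apply Measurable.neg
      apply hψ_cont.measurable.comp
      apply Measurable.const_mul
      exact ((quantileLoss_measurable τ).comp (measurable_snd.sub
        (Continuous.measurable (continuous_fst.inner continuous_const)))).sub
        ((measurable_fst.norm).const_mul (l * κ))
    exact hindep.comp (fun _ => fun q : EuclideanSpace ℝ (Fin p) × ℝ =>
      -ψ (α * (quantileLoss τ (q.2 - ⟪q.1, y⟫) - l * κ * ‖q.1‖))) (fun _ => hg)
  -- Chernoff bound at each useful net point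
  have hbadP : ∀ y ∈ s', μ (Bad y) ≤ ENNReal.ofReal (δ / N) := by
    intro y hy
    have hZint : Integrable (fun ω => Real.exp (1 * (∑ i, ξ y i) ω)) μ :=
      (hindepξ y).integrable_exp_mul_sum (fun i => hξmeas y i)
        (fun i _ => hξexp_int y hy i)
    have hcher := measure_ge_le_exp_mul_mgf (μ := μ) (X := ∑ i, ξ y i) (sj y) zero_le_one hZint
    have hsum : mgf (∑ i, ξ y i) μ 1 = ∏ i, mgf (ξ y i) μ 1 :=
      (hindepξ y).mgf_sum (fun i => hξmeas y i) Finset.univ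
    have hprod : ∏ i, mgf (ξ y i) μ 1
        ≤ Real.exp (∑ i, (-(α * m1 y i) + α ^ 2 / 2 * m2 y i)) := by
      rw [Real.exp_sum]
      exact Finset.prod_le_prod (fun i _ => mgf_nonneg) (fun i _ => hmgf_le y hy i)
    have hNδ : (0:ℝ) < (N:ℝ) / δ := div_pos hNR hδ0
    have hval : Real.exp (-1 * sj y) * Real.exp (∑ i, (-(α * m1 y i) + α ^ 2 / 2 * m2 y i))
        = δ / N := by
      rw [← Real.exp_add]
      have h1 : ∑ i, (-(α * m1 y i) + α ^ 2 / 2 * m2 y i)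
          = -(α * ∑ i, m1 y i) + α ^ 2 / 2 * ∑ i, m2 y i := by
        rw [Finset.sum_add_distrib, Finset.sum_neg_distrib, ← Finset.mul_sum, ← Finset.mul_sum]
      rw [h1]
      have h2 : -1 * sj y + (-(α * ∑ i, m1 y i) + α ^ 2 / 2 * ∑ i, m2 y i)
          = -Real.log ((N:ℝ) / δ) := by
        simp only [hsj_def]; ring
      rw [h2, Real.exp_neg, Real.exp_log hNδ, inv_div]
    have hfinal : (μ (Bad y)).toReal ≤ δ / N := by
      have hset : Bad y = {ω | sj y ≤ (∑ i, ξ y i) ω} := by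
        simp only [hBad_def, Finset.sum_apply]
      rw [hset]
      calc (μ {ω | sj y ≤ (∑ i, ξ y i) ω}).toReal
          ≤ Real.exp (-1 * sj y) * mgf (∑ i, ξ y i) μ 1 := hcher
        _ ≤ Real.exp (-1 * sj y)
            * Real.exp (∑ i, (-(α * m1 y i) + α ^ 2 / 2 * m2 y i)) := by
            rw [hsum]
            exact mul_le_mul_of_nonneg_left hprod (Real.exp_pos _).le
        _ = δ / N := hval
    calc μ (Bad y) = ENNReal.ofReal ((μ (Bad y)).toReal) :=
          (ENNReal.ofReal_toReal (measure_ne_top μ _)).symm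
      _ ≤ ENNReal.ofReal (δ / N) := ENNReal.ofReal_le_ofReal hfinal
  -- union bound
  have hUnion : μ (⋃ y ∈ s', Bad y) ≤ ENNReal.ofReal δ := by
    have hNne : ((N:ℝ)) ≠ 0 := hNR.ne'
    calc μ (⋃ y ∈ s', Bad y) ≤ ∑ y ∈ s', μ (Bad y) := measure_biUnion_finset_le _ _
      _ ≤ ∑ _y ∈ s', ENNReal.ofReal (δ / N) := Finset.sum_le_sum fun y hy => hbadP y hy
      _ = (s'.card : ℝ≥0∞) * ENNReal.ofReal (δ / N) := by
          rw [Finset.sum_const, nsmul_eq_mul]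
      _ ≤ (N : ℝ≥0∞) * ENNReal.ofReal (δ / N) := by
          refine mul_le_mul_left ?_ _
          have : s'.card ≤ N := (Finset.card_filter_le s _).trans_eq hcard
          exact_mod_cast this
      _ = ENNReal.ofReal δ := by
          rw [← ENNReal.ofReal_natCast, ← ENNReal.ofReal_mul (Nat.cast_nonneg N)]
          congr 1
          field_simp
  have hGmeas : MeasurableSet (⋃ y ∈ s', Bad y) :=
    s'.measurableSet_biUnion fun y _ => hBadmeas y
  have hGood : ENNReal.ofReal (1 - δ) ≤ μ ((⋃ y ∈ s', Bad y)ᶜ) := by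
    calc ENNReal.ofReal (1 - δ) = 1 - ENNReal.ofReal δ := by
          rw [ENNReal.ofReal_sub 1 hδ0.le, ENNReal.ofReal_one]
      _ ≤ 1 - μ (⋃ y ∈ s', Bad y) := tsub_le_tsub_left hUnion 1
      _ = μ ((⋃ y ∈ s', Bad y)ᶜ) := (prob_compl_eq_one_sub hGmeas).symm
  refine le_trans hGood (measure_mono ?_)
  intro ω hω
  have hω' : ∀ y ∈ s', ω ∉ Bad y := by
    simp only [Set.mem_compl_iff, Set.mem_iUnion, not_exists] at hω
    intro y hy
    exact hω y hy
  set A := ∫ ω', ‖X0 ω'‖ ∂μ with hA_def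
  set A2 := ∫ ω', ‖X0 ω'‖ ^ 2 ∂μ with hA2_def
  set S := sSup ((fun θ => (1 / (n : ℝ)) *
      ∑ i, ∫ ω', quantileLoss τ (Yi i ω' - ⟪Xi i ω', θ⟫) ^ 2 ∂μ) '' Θ) with hS_def
  set θ := θhat ω with hθ_def
  have hθΘ : θ ∈ Θ := hθhat_mem ω
  obtain ⟨y, hys, hyb⟩ : ∃ y ∈ s, θ ∈ Metric.closedBall y κ := by
    have := hcover hθΘ
    simpa using this
  have hys' : y ∈ s' := Finset.mem_filter.2 ⟨hys, ⟨θ, hθΘ, hyb⟩⟩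
  have hωy : ∑ i, ξ y i ω < sj y := by
    have := hω' y hys'
    simp only [hBad_def, Set.mem_setOf_eq, not_le] at this
    exact this
  have hyθ : ‖y - θ‖ ≤ κ := by
    have := Metric.mem_closedBall.1 hyb
    rw [dist_comm] at this
    rwa [← dist_eq_norm]
  -- pointwise comparisons between `W y` and `ρ θ`
  have hbnd : ∀ i ω', l * ‖Xi i ω'‖ * ‖y - θ‖ ≤ l * κ * ‖Xi i ω'‖ := by
    intro i ω'
    have h := mul_le_mul_of_nonneg_left hyθ (mul_nonneg hl0.le (norm_nonneg (Xi i ω')))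
    calc l * ‖Xi i ω'‖ * ‖y - θ‖ ≤ l * ‖Xi i ω'‖ * κ := h
      _ = l * κ * ‖Xi i ω'‖ := by ring
  have hWle : ∀ i ω', W y i ω' ≤ ρ θ i ω' := by
    intro i ω'
    obtain ⟨h3, h4⟩ := abs_le.1 (hlip y θ i ω')
    have h5 := hbnd i ω'
    simp only [hW_def]
    linarith
  have hρle : ∀ i ω', ρ θ i ω' ≤ W y i ω' + 2 * l * κ * ‖Xi i ω'‖ := by
    intro i ω'
    obtain ⟨h3, h4⟩ := abs_le.1 (hlip y θ i ω')
    have h5 := hbnd i ω'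
    simp only [hW_def]
    linarith
  have hW2le : ∀ i ω', (W y i ω') ^ 2 ≤ (ρ θ i ω') ^ 2 + (l * κ) ^ 2 * ‖Xi i ω'‖ ^ 2 := by
    intro i ω'
    have h1 := hWle i ω'
    have hρ := hρ0 θ i ω'
    have hρy := hρ0 y i ω'
    have hc : 0 ≤ l * κ * ‖Xi i ω'‖ := mul_nonneg (mul_nonneg hl0.le hκ.le) (norm_nonneg _)
    have hWlb : -(l * κ * ‖Xi i ω'‖) ≤ W y i ω' := by
      simp only [hW_def]; linarith
    have hid : (l * κ * ‖Xi i ω'‖) ^ 2 = (l * κ) ^ 2 * ‖Xi i ω'‖ ^ 2 := by ring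
    rcases le_or_gt 0 (W y i ω') with h | h
    · have h2 : (W y i ω') ^ 2 ≤ (ρ θ i ω') ^ 2 := pow_le_pow_left₀ h h1 2
      have h9 : 0 ≤ (l * κ) ^ 2 * ‖Xi i ω'‖ ^ 2 := by
        rw [← hid]; exact sq_nonneg _
      linarith
    · have h2 : (W y i ω') ^ 2 ≤ (l * κ * ‖Xi i ω'‖) ^ 2 :=
        sq_le_sq' hWlb (h.le.trans hc)
      rw [hid] at h2
      linarith [sq_nonneg (ρ θ i ω')]
  -- integrated comparisons
  have hρθ_int : ∀ i, Integrable (ρ θ i) μ := fun i => hRn_int θ hθΘ i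
  have hρθ2_int : ∀ i, Integrable (fun ω' => ρ θ i ω' ^ 2) μ := fun i => hsq_int θ hθΘ i
  have hm1le : ∀ i, ∫ ω', ρ θ i ω' ∂μ ≤ m1 y i + 2 * l * κ * A := by
    intro i
    have hgint : Integrable (fun ω' => W y i ω' + 2 * l * κ * ‖Xi i ω'‖) μ :=
      (hW_int y hys' i).add ((hXi_int i).const_mul (2 * l * κ))
    have h1 : ∫ ω', ρ θ i ω' ∂μ ≤ ∫ ω', (W y i ω' + 2 * l * κ * ‖Xi i ω'‖) ∂μ :=
      integral_mono (hρθ_int i) hgint (fun ω' => hρle i ω')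
    have h2 : ∫ ω', (W y i ω' + 2 * l * κ * ‖Xi i ω'‖) ∂μ
        = m1 y i + 2 * l * κ * ∫ ω', ‖Xi i ω'‖ ∂μ := by
      rw [integral_add (hW_int y hys' i) ((hXi_int i).const_mul (2 * l * κ)),
        integral_const_mul]
    rw [h2, hXi_eq i] at h1
    exact h1
  have hm2le : ∀ i, m2 y i ≤ (∫ ω', ρ θ i ω' ^ 2 ∂μ) + (l * κ) ^ 2 * A2 := by
    intro i
    have hgint : Integrable (fun ω' => ρ θ i ω' ^ 2 + (l * κ) ^ 2 * ‖Xi i ω'‖ ^ 2) μ :=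
      (hρθ2_int i).add ((hXi_sq_int i).const_mul ((l * κ) ^ 2))
    have h1 : m2 y i ≤ ∫ ω', (ρ θ i ω' ^ 2 + (l * κ) ^ 2 * ‖Xi i ω'‖ ^ 2) ∂μ := by
      simp only [hm2_def]
      exact integral_mono (hW2_int y hys' i) hgint (fun ω' => hW2le i ω')
    have h2 : ∫ ω', (ρ θ i ω' ^ 2 + (l * κ) ^ 2 * ‖Xi i ω'‖ ^ 2) ∂μ
        = (∫ ω', ρ θ i ω' ^ 2 ∂μ) + (l * κ) ^ 2 * ∫ ω', ‖Xi i ω'‖ ^ 2 ∂μ := by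
      rw [integral_add (hρθ2_int i) ((hXi_sq_int i).const_mul ((l * κ) ^ 2)),
        integral_const_mul]
    rw [h2, hXi_sq_eq i] at h1
    exact h1
  -- empirical comparison
  have hemp : ∑ i, ψ (α * W y i ω) ≤ ∑ i, ψ (α * ρ θ i ω) :=
    Finset.sum_le_sum fun i _ => hψ_mono (mul_le_mul_of_nonneg_left (hWle i ω) hα.le)
  have hξsum : ∑ i, ξ y i ω = -∑ i, ψ (α * W y i ω) := by
    simp only [hξ_def]
    rw [Finset.sum_neg_distrib]
  -- final arithmetic
  set T1 := ∑ i, m1 y i with hT1_def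
  set T2 := ∑ i, m2 y i with hT2_def
  set Eψ := ∑ i, ψ (α * ρ θ i ω) with hEψ_def
  set Q := ∑ i, ∫ ω', ρ θ i ω' ^ 2 ∂μ with hQ_def
  set L := Real.log ((N:ℝ) / δ) with hL_def
  have hQ0 : 0 ≤ Q :=
    Finset.sum_nonneg fun i _ => integral_nonneg fun ω' => sq_nonneg _
  have hQS : (1 / (n:ℝ)) * Q ≤ S := by
    apply le_csSup hbdd
    exact ⟨θ, hθΘ, rfl⟩
  have hS0 : 0 ≤ S :=
    le_trans (mul_nonneg (by positivity) hQ0) hQS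
  have hA0 : 0 ≤ A := integral_nonneg fun ω' => norm_nonneg _
  have hA20 : 0 ≤ A2 := integral_nonneg fun ω' => sq_nonneg _
  have hRnρ : Rn θ = (1 / (n:ℝ)) * ∑ i, ∫ ω', ρ θ i ω' ∂μ := hRn θ
  have key1 : (1/(n:ℝ)) * (∑ i, ∫ ω', ρ θ i ω' ∂μ) ≤ (1/(n:ℝ)) * T1 + 2*l*κ*A := by
    have h1 : ∑ i, ∫ ω', ρ θ i ω' ∂μ ≤ T1 + (n:ℝ)*(2*l*κ*A) := by
      have h := Finset.sum_le_sum (fun i (_ : i ∈ Finset.univ) => hm1le i)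
      rw [Finset.sum_add_distrib, Finset.sum_const, Finset.card_univ, Fintype.card_fin,
        nsmul_eq_mul] at h
      exact h
    have h2 := mul_le_mul_of_nonneg_left h1 (by positivity : (0:ℝ) ≤ 1/(n:ℝ))
    have hid1 : (1/(n:ℝ)) * (T1 + (n:ℝ)*(2*l*κ*A)) = (1/(n:ℝ))*T1 + 2*l*κ*A := by
      field_simp
    rw [hid1] at h2
    exact h2
  have key2 : (1/(n:ℝ)) * T1 - α/2 * ((1/(n:ℝ)) * T2) - (1/((n:ℝ)*α)) * L
      ≤ (1/((n:ℝ)*α)) * Eψ := by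
    have h2' : α * T1 - α^2/2 * T2 - L ≤ Eψ := by
      have h3 : -(sj y) ≤ -(∑ i, ξ y i ω) := by linarith [hωy]
      rw [hξsum, neg_neg] at h3
      have h4 : -(sj y) = α * T1 - α^2/2*T2 - L := by
        simp only [hsj_def]; ring
      rw [h4] at h3
      linarith [hemp]
    have hpos : (0:ℝ) < 1/((n:ℝ)*α) := by positivity
    have h5 := mul_le_mul_of_nonneg_left h2' hpos.le
    have hid2 : (1/((n:ℝ)*α)) * (α*T1 - α^2/2*T2 - L)
        = (1/(n:ℝ))*T1 - α/2*((1/(n:ℝ))*T2) - (1/((n:ℝ)*α))*L := by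
      field_simp
    rw [hid2] at h5
    exact h5
  have key3 : α/2 * ((1/(n:ℝ)) * T2) ≤ α * S + α * (κ*l)^2 * A2 := by
    have h3 : T2 ≤ Q + (n:ℝ) * ((l*κ)^2 * A2) := by
      have h := Finset.sum_le_sum (fun i (_ : i ∈ Finset.univ) => hm2le i)
      rw [Finset.sum_add_distrib, Finset.sum_const, Finset.card_univ, Fintype.card_fin,
        nsmul_eq_mul] at h
      exact h
    have h4 : (1/(n:ℝ)) * T2 ≤ (1/(n:ℝ)) * Q + (l*κ)^2 * A2 := by
      have h := mul_le_mul_of_nonneg_left h3 (by positivity : (0:ℝ) ≤ 1/(n:ℝ))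
      have hid3 : (1/(n:ℝ)) * (Q + (n:ℝ)*((l*κ)^2*A2)) = (1/(n:ℝ))*Q + (l*κ)^2*A2 := by
        field_simp
      linarith
    have h5 : α/2 * ((1/(n:ℝ)) * T2) ≤ α/2 * ((1/(n:ℝ))*Q + (l*κ)^2*A2) :=
      mul_le_mul_of_nonneg_left h4 (by positivity)
    have h6 : α/2 * ((1/(n:ℝ))*Q) ≤ α/2 * S :=
      mul_le_mul_of_nonneg_left hQS (by positivity)
    have h7 : 0 ≤ α * S := mul_nonneg hα.le hS0
    have h8 : 0 ≤ α * ((κ*l)^2 * A2) := mul_nonneg hα.le (mul_nonneg (sq_nonneg _) hA20)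
    nlinarith [h5, h6, h7, h8]
  have hfinal : Rn θ - (1/((n:ℝ) * α)) * Eψ
      ≤ 2*κ*l*A + α*S + α*(κ*l)^2*A2 + (1/((n:ℝ)*α))*L := by
    rw [hRnρ]
    linarith [key1, key2, key3]
  simp only [Set.mem_setOf_eq]
  have hgoal := hfinal
  simp only [hEψ_def, hρ_def] at hgoal
  exact hgoal
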